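/- Let G = (V, E) be a finite simple undirected graph, let k ≥ 1, and let e = (u, v) be an anchor edge joining two non-adjacent vertices of G whose endpoints both lie in the onion layers of the (k-1)-core. If e has at least one follower, i.e. F({e}, G) ≠ ∅, then: (i) if l(u) < l(v) then d*(u) = k - 1; (ii) if l(v) < l(u) then d*(v) = k - 1; and (iii) if l(u) = l(v) then d*(u) = k - 1 and d*(v) = k - 1. -/
import Mathlib


open SimpleGraph

variable {V : Type*}

/-- The vertex set of the `k`-core of `G`: the largest set `S` such that every
vertex of `S` has at least `k` neighbors in `S` (realized as the union of all
such sets). -/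
def coreSet (G : SimpleGraph V) (k : ℕ) : Set V :=
  {u | ∃ S : Set V, u ∈ S ∧ ∀ v ∈ S, k ≤ (S ∩ G.neighborSet v).ncard}

/-- The followers of a set `A` of anchor edges: vertices of the `k`-core of `G + A`
that are not in the `k`-core of `G`. -/
def followers (G : SimpleGraph V) (k : ℕ) (A : Set (Sym2 V)) : Set V :=
  coreSet (G ⊔ SimpleGraph.fromEdgeSet A) k \ coreSet G k

/-- `onionRemain G k i` is the set of vertices of the `(k-1)`-core of `G` that
survive after peeling the first `i` onion layers (peeling with threshold `k`):
`onionRemain G k 0 = V(C_{k-1}(G))`, and at each step the vertices of degree `< k`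
in the current induced subgraph are removed. -/
def onionRemain (G : SimpleGraph V) (k : ℕ) : ℕ → Set V
  | 0 => coreSet G (k - 1)
  | (i + 1) =>
      {u ∈ onionRemain G k i | k ≤ (onionRemain G k i ∩ G.neighborSet u).ncard}

/-- The `i`-th onion layer (`i ≥ 1`): vertices removed at the `i`-th peeling step. -/
def onionLayer (G : SimpleGraph V) (k : ℕ) (i : ℕ) : Set V :=
  onionRemain G k (i - 1) \ onionRemain G k i

/-- `dstar G k i u` is `d*(u)` for a vertex `u` of layer `i`: the number of
neighbors of `u` lying in strictly higher layers or in the `k`-core, i.e. the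
degree of `u` in the graph remaining after peeling layers `1, …, i` (except `u`
itself, which is automatic since `u` is not its own neighbor). -/
noncomputable def dstar (G : SimpleGraph V) (k : ℕ) (i : ℕ) (u : V) : ℕ :=
  (onionRemain G k i ∩ G.neighborSet u).ncard

lemma mem_coreSet_card [Finite V] {G : SimpleGraph V} {k : ℕ} {w : V}
    (hw : w ∈ coreSet G k) : k ≤ (coreSet G k ∩ G.neighborSet w).ncard := by
  obtain ⟨S, hwS, hS⟩ := hw
  have hsub : S ⊆ coreSet G k := fun x hx => ⟨S, hx, hS⟩
  exact le_trans (hS w hwS)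
    (Set.ncard_le_ncard (Set.inter_subset_inter_left _ hsub) (Set.toFinite _))

lemma onionRemain_anti (G : SimpleGraph V) (k : ℕ) {i j : ℕ} (h : i ≤ j) :
    onionRemain G k j ⊆ onionRemain G k i := by
  induction h with
  | refl => exact subset_rfl
  | step h ih => exact fun x hx => ih hx.1

lemma dstar_le [Finite V] {G : SimpleGraph V} {k i : ℕ} {u : V}
    (hi : 1 ≤ i) (hu : u ∈ onionLayer G k i) : dstar G k i u ≤ k - 1 := by
  obtain ⟨h1, h2⟩ := hu
  have hi' : i - 1 + 1 = i := Nat.succ_pred_eq_of_pos hi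
  have hlt : (onionRemain G k (i - 1) ∩ G.neighborSet u).ncard < k := by
    by_contra h
    push_neg at h
    apply h2
    rw [← hi']
    exact ⟨h1, h⟩
  have hsub : dstar G k i u ≤ (onionRemain G k (i - 1) ∩ G.neighborSet u).ncard :=
    Set.ncard_le_ncard
      (Set.inter_subset_inter_left _ (onionRemain_anti G k (Nat.sub_le i 1)))
      (Set.toFinite _)
  omega

/-- Onion-layer based pruning: if the anchor edge `e = (u, v)` (non-adjacent
endpoints, both lying in onion layers of the `(k-1)`-core) has at least one
follower, then (i) if `l(u) < l(v)` then `d*(u) = k - 1`; (ii) if `l(v) < l(u)`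
then `d*(v) = k - 1`; (iii) if `l(u) = l(v)` then `d*(u) = d*(v) = k - 1`. -/
theorem stmt_7 [Fintype V] (G : SimpleGraph V) (k : ℕ) (hk : 1 ≤ k)
    (u v : V) (huv : u ≠ v) (hadj : ¬ G.Adj u v)
    (iu iv : ℕ) (hiu : 1 ≤ iu) (hiv : 1 ≤ iv)
    (hu : u ∈ onionLayer G k iu) (hv : v ∈ onionLayer G k iv)
    (hfol : (followers G k {s(u, v)}).Nonempty) :
    (iu < iv → dstar G k iu u = k - 1) ∧
    (iv < iu → dstar G k iv v = k - 1) ∧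
    (iu = iv → dstar G k iu u = k - 1 ∧ dstar G k iv v = k - 1) := by
  classical
  set G' := G ⊔ SimpleGraph.fromEdgeSet {s(u, v)} with hG'
  set C' := coreSet G' k with hC'
  have hadj' : ∀ a b : V, G'.Adj a b ↔ G.Adj a b ∨ (a = u ∧ b = v) ∨ (a = v ∧ b = u) := by
    intro a b
    rw [hG']
    simp only [sup_adj, fromEdgeSet_adj, Set.mem_singleton_iff, Sym2.eq, Sym2.rel_iff',
      Prod.mk.injEq, Prod.swap_prod_mk]
    constructor
    · rintro (h | ⟨(⟨rfl, rfl⟩ | ⟨rfl, rfl⟩), hne⟩) <;> tauto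
    · rintro (h | ⟨rfl, rfl⟩ | ⟨rfl, rfl⟩)
      · exact Or.inl h
      · exact Or.inr ⟨Or.inl ⟨rfl, rfl⟩, huv⟩
      · exact Or.inr ⟨Or.inr ⟨rfl, rfl⟩, huv.symm⟩
  have hk_core : ∀ w ∈ C', k ≤ (C' ∩ G'.neighborSet w).ncard := fun w hw =>
    mem_coreSet_card hw
  -- every vertex of C' has at least k-1 G-neighbors in C'
  have hk1 : ∀ w ∈ C', k - 1 ≤ (C' ∩ G.neighborSet w).ncard := by
    intro w hw
    have h1 := hk_core w hw
    have h2 : C' ∩ G'.neighborSet w ⊆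
        insert (if w = u then v else u) (C' ∩ G.neighborSet w) := by
      rintro x ⟨hxC, hxN⟩
      rcases (hadj' w x).1 hxN with h | ⟨rfl, rfl⟩ | ⟨rfl, rfl⟩
      · exact Set.mem_insert_of_mem _ ⟨hxC, h⟩
      · simp
      · simp [huv.symm]
    have h3 := Set.ncard_le_ncard h2 (Set.toFinite _)
    have h4 := Set.ncard_insert_le (if w = u then v else u) (C' ∩ G.neighborSet w)
    omega
  -- vertices of C' other than u, v have at least k G-neighbors in C'
  have hkw : ∀ w ∈ C', w ≠ u → w ≠ v → k ≤ (C' ∩ G.neighborSet w).ncard := by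
    intro w hw hwu hwv
    refine le_trans (hk_core w hw) (Set.ncard_le_ncard ?_ (Set.toFinite _))
    rintro x ⟨hxC, hxN⟩
    refine ⟨hxC, ?_⟩
    rcases (hadj' w x).1 hxN with h | ⟨rfl, rfl⟩ | ⟨rfl, rfl⟩
    · exact h
    · exact absurd rfl hwu
    · exact absurd rfl hwv
  -- both u and v belong to C'
  have hgoodOf : (u ∉ C' ∨ v ∉ C') → False := by
    intro h
    have hgood : ∀ x ∈ C', k ≤ (C' ∩ G.neighborSet x).ncard := by
      intro x hx
      refine le_trans (hk_core x hx) (Set.ncard_le_ncard ?_ (Set.toFinite _))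
      rintro y ⟨hyC, hyN⟩
      refine ⟨hyC, ?_⟩
      rcases (hadj' x y).1 hyN with h' | ⟨rfl, rfl⟩ | ⟨rfl, rfl⟩
      · exact h'
      · rcases h with h | h
        · exact absurd hx h
        · exact absurd hyC h
      · rcases h with h | h
        · exact absurd hyC h
        · exact absurd hx h
    have hsub : C' ⊆ coreSet G k := fun x hx => ⟨C', hx, hgood⟩
    obtain ⟨w, hw⟩ := hfol
    have hw' : w ∈ C' \ coreSet G k := hw
    exact hw'.2 (hsub hw'.1)
  have huC : u ∈ C' := by by_contra h; exact hgoodOf (Or.inl h)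
  have hvC : v ∈ C' := by by_contra h; exact hgoodOf (Or.inr h)
  -- C' survives peeling as long as j+1 ≤ min iu iv
  have key : ∀ j, j + 1 ≤ iu → j + 1 ≤ iv → C' ⊆ onionRemain G k j := by
    intro j
    induction j with
    | zero =>
      intro _ _ w hw
      show w ∈ coreSet G (k - 1)
      exact ⟨C', hw, hk1⟩
    | succ j ih =>
      intro h1 h2 w hw
      have hCj : C' ⊆ onionRemain G k j := ih (by omega) (by omega)
      by_cases hwu : w = u
      · subst hwu
        exact onionRemain_anti G k (by omega : j + 1 ≤ iu - 1) hu.1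
      by_cases hwv : w = v
      · subst hwv
        exact onionRemain_anti G k (by omega : j + 1 ≤ iv - 1) hv.1
      · exact ⟨hCj hw,
          le_trans (hkw w hw hwu hwv)
            (Set.ncard_le_ncard (Set.inter_subset_inter_left _ hCj) (Set.toFinite _))⟩
  -- C' minus the endpoints survives one more peeling step
  have key2 : ∀ i, 1 ≤ i → i ≤ iu → i ≤ iv → C' \ {u, v} ⊆ onionRemain G k i := by
    intro i h0 h1 h2 w hw
    obtain ⟨hwC, hwuv⟩ := hw
    simp only [Set.mem_insert_iff, Set.mem_singleton_iff, not_or] at hwuv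
    have hi' : i - 1 + 1 = i := Nat.succ_pred_eq_of_pos h0
    have hCj : C' ⊆ onionRemain G k (i - 1) := key (i - 1) (by omega) (by omega)
    rw [← hi']
    exact ⟨hCj hwC,
      le_trans (hkw w hwC hwuv.1 hwuv.2)
        (Set.ncard_le_ncard (Set.inter_subset_inter_left _ hCj) (Set.toFinite _))⟩
  have lower_u : iu ≤ iv → k - 1 ≤ dstar G k iu u := by
    intro h
    have h2 := key2 iu hiu le_rfl h
    have hsub : C' ∩ G.neighborSet u ⊆ onionRemain G k iu ∩ G.neighborSet u := by
      rintro x ⟨hxC, hxN⟩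
      refine ⟨h2 ⟨hxC, ?_⟩, hxN⟩
      simp only [Set.mem_insert_iff, Set.mem_singleton_iff, not_or]
      constructor
      · rintro rfl; exact G.irrefl hxN
      · rintro rfl; exact hadj hxN
    exact le_trans (hk1 u huC) (Set.ncard_le_ncard hsub (Set.toFinite _))
  have lower_v : iv ≤ iu → k - 1 ≤ dstar G k iv v := by
    intro h
    have h2 := key2 iv hiv h le_rfl
    have hsub : C' ∩ G.neighborSet v ⊆ onionRemain G k iv ∩ G.neighborSet v := by
      rintro x ⟨hxC, hxN⟩
      refine ⟨h2 ⟨hxC, ?_⟩, hxN⟩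
      simp only [Set.mem_insert_iff, Set.mem_singleton_iff, not_or]
      constructor
      · rintro rfl; exact hadj ((G.adj_symm hxN))
      · rintro rfl; exact G.irrefl hxN
    exact le_trans (hk1 v hvC) (Set.ncard_le_ncard hsub (Set.toFinite _))
  refine ⟨fun h => le_antisymm (dstar_le hiu hu) (lower_u h.le),
    fun h => le_antisymm (dstar_le hiv hv) (lower_v h.le),
    fun h => ⟨le_antisymm (dstar_le hiu hu) (lower_u h.le),
      le_antisymm (dstar_le hiv hv) (lower_v h.ge)⟩⟩
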